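/- The limit, as n → ∞, of d(SS_n) / (4^n · n^{3/2}) equals 2 / (3√π), where d(SS_n) is the Wiener index of the lattice of lower sets of the shifted staircase poset S_n = {(i,j) : 1 ≤ i ≤ j ≤ n}. -/

import Mathlib

/-- The Hasse diagram graph of a preorder: vertices are the elements, with an
edge between two elements exactly when one covers the other. -/
def hasseGraph (α : Type*) [Preorder α] : SimpleGraph α where
  Adj a b := a ⋖ b ∨ b ⋖ a
  symm := ⟨fun _ _ h => h.symm⟩
  loopless := ⟨fun _ h => h.elim (fun h' => h'.lt.ne rfl) (fun h' => h'.lt.ne rfl)⟩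

/-- The Wiener index of a poset: the sum over all ordered pairs of elements
of the graph distance in the Hasse diagram graph. -/
noncomputable def wienerIndex (α : Type*) [Preorder α] : ℕ :=
  ∑ᶠ p : α, ∑ᶠ q : α, (hasseGraph α).dist p q
/-- The shifted staircase poset $S_n = \{(i,j) : 1 ≤ i ≤ j ≤ n\}$ with
componentwise order. -/
abbrev Staircase (n : ℕ) : Type := {p : Fin n × Fin n // p.1 ≤ p.2}

open Finset
open scoped symmDiff

section DistSection
variable {α : Type*} [Fintype α] [PartialOrder α]

lemma covby_of_insert {I J : LowerSet α} {x : α} (hx : x ∉ I) (hJ : (J : Set α) = insert x (I : Set α)) :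
    I ⋖ J := by
  have hIJ : I < J := by
    rw [← LowerSet.coe_ssubset_coe, hJ]
    exact Set.ssubset_insert hx
  refine ⟨hIJ, fun K hIK hKJ => ?_⟩
  obtain ⟨y, hyK, hyI⟩ := Set.exists_of_ssubset (LowerSet.coe_ssubset_coe.2 hIK)
  have hyJ : y ∈ (J : Set α) := (LowerSet.coe_subset_coe.2 hKJ.le) hyK
  rw [hJ] at hyJ
  have hyx : y = x := by
    rcases hyJ with h | h
    · exact h
    · exact absurd h hyI
  refine hKJ.ne ?_
  apply le_antisymm hKJ.le
  rw [← LowerSet.coe_subset_coe, hJ]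
  exact Set.insert_subset (hyx ▸ hyK) (LowerSet.coe_subset_coe.2 hIK.le)

lemma exists_insert_of_covby {I J : LowerSet α} (h : I ⋖ J) :
    ∃ x, x ∉ I ∧ x ∈ J ∧ (J : Set α) = insert x (I : Set α) := by
  obtain ⟨y, hyJ, hyI⟩ := Set.exists_of_ssubset (LowerSet.coe_ssubset_coe.2 h.lt)
  obtain ⟨x, hx, hmax⟩ : ∃ x ∈ (J : Set α) \ (I : Set α), ∀ a ∈ (J : Set α) \ (I : Set α),
      id x ≤ id a → id x = id a := by
    obtain ⟨x, hx, hm⟩ := Set.Finite.exists_maximalFor id ((J : Set α) \ (I : Set α))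
      (Set.toFinite _) ⟨y, hyJ, hyI⟩
    exact ⟨x, hx, fun a ha h => le_antisymm h (hm ha h)⟩
  have hKlow : IsLowerSet ((J : Set α) \ {x}) := by
    intro a b hba ha
    refine ⟨J.lower hba ha.1, ?_⟩
    intro hbx
    rcases eq_or_ne a x with hax | hax
    · exact ha.2 hax
    by_cases haI : a ∈ I
    · subst hbx
      exact hx.2 (I.lower hba haI)
    · subst hbx
      exact hax (hmax a ⟨ha.1, haI⟩ hba).symm
  set K : LowerSet α := ⟨(J : Set α) \ {x}, hKlow⟩ with hKdef
  have hIK : I ≤ K := by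
    rw [← LowerSet.coe_subset_coe]
    intro z hz
    exact ⟨(LowerSet.coe_subset_coe.2 h.lt.le) hz, fun hzx => hx.2 (hzx ▸ hz)⟩
  have hKJ : K < J := by
    rw [← LowerSet.coe_ssubset_coe]
    constructor
    · exact Set.diff_subset
    · intro hsub
      exact (hsub hx.1).2 rfl
  have hIeqK : I = K := by
    by_contra hne
    exact h.2 (lt_of_le_of_ne hIK hne) hKJ
  refine ⟨x, fun hxI => hx.2 hxI, hx.1, ?_⟩
  have : (I : Set α) = (J : Set α) \ {x} := by rw [hIeqK]; rfl
  rw [this, Set.insert_diff_singleton, Set.insert_eq_of_mem hx.1]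

lemma adj_symmdiff_ncard {I J : LowerSet α} (h : (hasseGraph (LowerSet α)).Adj I J) :
    ((I : Set α) ∆ (J : Set α)).ncard = 1 := by
  have key : ∀ {A B : LowerSet α}, A ⋖ B → ((A : Set α) ∆ (B : Set α)).ncard = 1 := by
    intro A B hAB
    obtain ⟨x, hx, hxB, hB⟩ := exists_insert_of_covby hAB
    have : (A : Set α) ∆ (B : Set α) = {x} := by
      rw [hB]
      ext y
      simp only [Set.mem_symmDiff, Set.mem_insert_iff, Set.mem_singleton_iff]
      constructor
      · rintro (⟨hyA, hy⟩ | ⟨hy, hyA⟩)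
        · exact absurd (Or.inr hyA) hy
        · rcases hy with rfl | hy
          · rfl
          · exact absurd hy hyA
      · rintro rfl
        exact Or.inr ⟨Or.inl rfl, hx⟩
    rw [this, Set.ncard_singleton]
  rcases h with h | h
  · exact key h
  · rw [symmDiff_comm]; exact key h

lemma exists_adj_step {I J : LowerSet α} (hne : I ≠ J) :
    ∃ K : LowerSet α, (hasseGraph (LowerSet α)).Adj I K ∧
      (((K : Set α) ∆ (J : Set α)).ncard) + 1 = ((I : Set α) ∆ (J : Set α)).ncard := by
  by_cases hd : ((I : Set α) \ (J : Set α)).Nonempty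
  · obtain ⟨x, hx, hmax⟩ : ∃ x ∈ (I : Set α) \ (J : Set α), ∀ a ∈ (I : Set α) \ (J : Set α),
        id x ≤ id a → id x = id a := by
      obtain ⟨x, hx, hm⟩ := Set.Finite.exists_maximalFor id ((I : Set α) \ (J : Set α))
        (Set.toFinite _) hd
      exact ⟨x, hx, fun a ha h => le_antisymm h (hm ha h)⟩
    have hKlow : IsLowerSet ((I : Set α) \ {x}) := by
      intro a b hba ha
      refine ⟨I.lower hba ha.1, ?_⟩
      intro hbx
      rcases eq_or_ne a x with hax | hax
      · exact ha.2 hax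
      by_cases haJ : a ∈ (J : Set α)
      · subst hbx
        exact hx.2 (J.lower hba haJ)
      · subst hbx
        exact hax (hmax a ⟨ha.1, haJ⟩ hba).symm
    refine ⟨⟨(I : Set α) \ {x}, hKlow⟩, Or.inr (covby_of_insert (fun h => h.2 rfl) ?_), ?_⟩
    · show (I : Set α) = insert x ((I : Set α) \ {x})
      rw [Set.insert_diff_singleton, Set.insert_eq_of_mem hx.1]
    · have hsd : ((I : Set α) \ {x}) ∆ (J : Set α) = ((I : Set α) ∆ (J : Set α)) \ {x} := by
        ext y
        simp only [Set.mem_symmDiff, Set.mem_diff, Set.mem_singleton_iff]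
        constructor
        · rintro (⟨⟨hyI, hyx⟩, hyJ⟩ | ⟨hyJ, hyI⟩)
          · exact ⟨Or.inl ⟨hyI, hyJ⟩, hyx⟩
          · refine ⟨Or.inr ⟨hyJ, fun h => hyI ⟨h, ?_⟩⟩, ?_⟩
            · rintro rfl; exact hx.2 hyJ
            · rintro rfl; exact hx.2 hyJ
        · rintro ⟨h | h, hyx⟩
          · exact Or.inl ⟨⟨h.1, hyx⟩, h.2⟩
          · exact Or.inr ⟨h.1, fun hc => h.2 hc.1⟩
      rw [LowerSet.coe_mk, hsd]
      exact Set.ncard_diff_singleton_add_one (Set.mem_symmDiff.2 (Or.inl hx))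
  · have hIJ : (I : Set α) ⊆ (J : Set α) := by
      rw [← Set.diff_eq_empty]
      exact Set.not_nonempty_iff_eq_empty.1 hd
    have hd2 : ((J : Set α) \ (I : Set α)).Nonempty := by
      rcases Set.eq_empty_or_nonempty ((J : Set α) \ (I : Set α)) with h | h
      · exact absurd (LowerSet.ext (subset_antisymm hIJ (Set.diff_eq_empty.1 h))) hne
      · exact h
    obtain ⟨x, hx, hmin⟩ : ∃ x ∈ (J : Set α) \ (I : Set α), ∀ a ∈ (J : Set α) \ (I : Set α),
        id a ≤ id x → id x = id a := by
      obtain ⟨x, hx, hm⟩ := Set.Finite.exists_minimalFor id ((J : Set α) \ (I : Set α))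
        (Set.toFinite _) hd2
      exact ⟨x, hx, fun a ha h => le_antisymm (hm ha h) h⟩
    have hKlow : IsLowerSet (insert x (I : Set α)) := by
      intro a b hba ha
      rcases ha with rfl | haI
      · have hbJ : b ∈ (J : Set α) := J.lower hba hx.1
        by_cases hbI : b ∈ (I : Set α)
        · exact Or.inr hbI
        · exact Or.inl (hmin b ⟨hbJ, hbI⟩ hba).symm
      · exact Or.inr (I.lower hba haI)
    refine ⟨⟨insert x (I : Set α), hKlow⟩, Or.inl (covby_of_insert hx.2 rfl), ?_⟩
    have hsd : (insert x (I : Set α)) ∆ (J : Set α) = ((I : Set α) ∆ (J : Set α)) \ {x} := by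
      ext y
      simp only [Set.mem_symmDiff, Set.mem_diff, Set.mem_insert_iff, Set.mem_singleton_iff]
      constructor
      · rintro (⟨hy, hyJ⟩ | ⟨hyJ, hy⟩)
        · rcases hy with rfl | hyI
          · exact absurd hx.1 hyJ
          · exact ⟨Or.inl ⟨hyI, hyJ⟩, fun hc => hyJ (hc ▸ hx.1)⟩
        · exact ⟨Or.inr ⟨hyJ, fun h => hy (Or.inr h)⟩, fun hc => hy (Or.inl hc)⟩
      · rintro ⟨h | h, hyx⟩
        · exact Or.inl ⟨Or.inr h.1, h.2⟩
        · exact Or.inr ⟨h.1, fun hc => (hc.elim hyx h.2)⟩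
    rw [LowerSet.coe_mk, hsd]
    exact Set.ncard_diff_singleton_add_one (Set.mem_symmDiff.2 (Or.inr hx))

lemma exists_walk_symmdiff (I J : LowerSet α) :
    ∃ p : (hasseGraph (LowerSet α)).Walk I J, p.length = ((I : Set α) ∆ (J : Set α)).ncard := by
  generalize hc : ((I : Set α) ∆ (J : Set α)).ncard = c
  induction c generalizing I with
  | zero =>
    have : I = J := by
      ext1
      have := (Set.ncard_eq_zero (s := (I : Set α) ∆ (J : Set α)) (Set.toFinite _)).1 hc
      have h2 := symmDiff_eq_bot.1 this
      exact h2
    subst this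
    exact ⟨SimpleGraph.Walk.nil, rfl⟩
  | succ c ih =>
    have hne : I ≠ J := by
      intro h
      subst h
      simp [symmDiff_self] at hc
    obtain ⟨K, hadj, hcard⟩ := exists_adj_step hne
    have hK : ((K : Set α) ∆ (J : Set α)).ncard = c := by omega
    obtain ⟨p, hp⟩ := ih (I := K) hK
    exact ⟨SimpleGraph.Walk.cons hadj p, by simp [hp, hK]⟩

lemma symmdiff_ncard_le_length {I J : LowerSet α} (p : (hasseGraph (LowerSet α)).Walk I J) :
    ((I : Set α) ∆ (J : Set α)).ncard ≤ p.length := by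
  induction p with
  | nil => simp [symmDiff_self]
  | @cons A B C hadj q ih =>
    have htri : ((A : Set α) ∆ (C : Set α)).ncard
        ≤ ((A : Set α) ∆ (B : Set α)).ncard + ((B : Set α) ∆ (C : Set α)).ncard := by
      refine le_trans (Set.ncard_le_ncard (symmDiff_triangle _ (B : Set α) _) ?_) (Set.ncard_union_le _ _)
      exact (Set.toFinite _).union (Set.toFinite _)
    rw [SimpleGraph.Walk.length_cons]
    have := adj_symmdiff_ncard hadj
    omega

lemma hasse_dist_eq (I J : LowerSet α) :
    (hasseGraph (LowerSet α)).dist I J = ((I : Set α) ∆ (J : Set α)).ncard := by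
  obtain ⟨p, hp⟩ := exists_walk_symmdiff I J
  have hreach : (hasseGraph (LowerSet α)).Reachable I J := ⟨p⟩
  obtain ⟨q, hq⟩ := hreach.exists_walk_length_eq_dist
  refine le_antisymm (hp ▸ SimpleGraph.dist_le p) ?_
  rw [← hq]
  exact symmdiff_ncard_le_length q

end DistSection

section StaircaseSection
open Finset
open scoped Classical

variable {n : ℕ}

/-- row index of a cell -/
def rwc (x : Staircase n) : ℕ := (x.1.1 : ℕ)
/-- column index of a cell -/
def clc (x : Staircase n) : ℕ := (x.1.2 : ℕ)
/-- diagonal index of a cell -/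
def dgc (x : Staircase n) : ℕ := clc x - rwc x

lemma rwc_le_clc (x : Staircase n) : rwc x ≤ clc x := x.2

lemma clc_lt (x : Staircase n) : clc x < n := x.1.2.2

lemma rwc_add_dgc (x : Staircase n) : rwc x + dgc x = clc x := by
  have := rwc_le_clc x; unfold dgc; omega

lemma staircase_le_iff {x y : Staircase n} : x ≤ y ↔ rwc x ≤ rwc y ∧ clc x ≤ clc y := by
  change x.1 ≤ y.1 ↔ _
  rw [Prod.le_def]
  exact and_congr Iff.rfl Iff.rfl

/-- build a cell -/
def cell (a b : ℕ) (hab : a ≤ b) (hb : b < n) : Staircase n :=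
  ⟨(⟨a, lt_of_le_of_lt hab hb⟩, ⟨b, hb⟩), hab⟩

@[simp] lemma rwc_cell (a b : ℕ) (hab : a ≤ b) (hb : b < n) : rwc (cell a b hab hb) = a := rfl
@[simp] lemma clc_cell (a b : ℕ) (hab : a ≤ b) (hb : b < n) : clc (cell a b hab hb) = b := rfl
@[simp] lemma dgc_cell (a b : ℕ) (hab : a ≤ b) (hb : b < n) : dgc (cell a b hab hb) = b - a := rfl

lemma cell_eq_iff {x y : Staircase n} (h1 : rwc x = rwc y) (h2 : clc x = clc y) : x = y := by
  apply Subtype.ext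
  apply Prod.ext <;> apply Fin.ext <;> assumption

/-- counting function of a subset : number of elements `≥ m` -/
noncomputable def gf (S : Finset (Fin n)) (m : ℕ) : ℕ := (S.filter (fun k : Fin n => m ≤ (k : ℕ))).card

lemma gf_anti (S : Finset (Fin n)) {m m' : ℕ} (h : m ≤ m') : gf S m' ≤ gf S m := by
  apply Finset.card_le_card
  intro x hx
  rw [Finset.mem_filter] at hx ⊢
  exact ⟨hx.1, le_trans h hx.2⟩

lemma gf_succ (S : Finset (Fin n)) (k : Fin n) :
    gf S (k : ℕ) = gf S ((k : ℕ) + 1) + (if k ∈ S then 1 else 0) := by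
  unfold gf
  have hsplit : S.filter (fun x : Fin n => (k : ℕ) ≤ (x : ℕ))
      = S.filter (fun x : Fin n => (k : ℕ) + 1 ≤ (x : ℕ)) ∪ S.filter (fun x : Fin n => x = k) := by
    ext x
    simp only [Finset.mem_filter, Finset.mem_union]
    constructor
    · rintro ⟨hxS, hx⟩
      rcases eq_or_lt_of_le hx with h | h
      · exact Or.inr ⟨hxS, Fin.ext h.symm⟩
      · exact Or.inl ⟨hxS, h⟩
    · rintro (⟨hxS, hx⟩ | ⟨hxS, rfl⟩)
      · exact ⟨hxS, by omega⟩
      · exact ⟨hxS, le_refl _⟩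
  rw [hsplit, Finset.card_union_of_disjoint]
  · congr 1
    rw [Finset.filter_eq']
    split_ifs with h <;> simp [h]
  · rw [Finset.disjoint_left]
    rintro x hx1 hx2
    rw [Finset.mem_filter] at hx1 hx2
    rcases hx2 with ⟨_, rfl⟩
    omega

lemma gf_step (S : Finset (Fin n)) (k : ℕ) : gf S k ≤ gf S (k + 1) + 1 := by
  by_cases hk : k < n
  · have := gf_succ S ⟨k, hk⟩
    simp only at this
    split_ifs at this <;> omega
  · have : gf S k = 0 := by
      unfold gf
      rw [Finset.card_eq_zero, Finset.filter_eq_empty_iff]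
      intro x _
      have := x.2
      omega
    omega

lemma gf_le_add (S : Finset (Fin n)) {m m' : ℕ} (h : m ≤ m') : gf S m ≤ gf S m' + (m' - m) := by
  induction m', h using Nat.le_induction with
  | base => simp
  | succ m' hm ih =>
    have := gf_step S m'
    omega

lemma gf_le (S : Finset (Fin n)) (m : ℕ) : gf S m ≤ n - m := by
  unfold gf
  calc (S.filter (fun k : Fin n => m ≤ (k : ℕ))).card
      ≤ ((univ : Finset (Fin n)).filter (fun k : Fin n => m ≤ (k : ℕ))).card :=
        Finset.card_le_card (Finset.filter_subset_filter _ (Finset.subset_univ S))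
    _ = (Finset.Ico m n).card := by
        refine Finset.card_bij' (fun (x : Fin n) _ => (x : ℕ))
          (fun (v : ℕ) hv => (⟨v, (Finset.mem_Ico.1 hv).2⟩ : Fin n)) ?_ ?_ ?_ ?_
        · intro a ha
          exact Finset.mem_Ico.2 ⟨(Finset.mem_filter.1 ha).2, a.2⟩
        · intro v hv
          exact Finset.mem_filter.2 ⟨Finset.mem_univ _, (Finset.mem_Ico.1 hv).1⟩
        · intro a _
          exact Fin.ext rfl
        · intro v _
          rfl
    _ = n - m := Nat.card_Ico m n

/-- The lower set associated to a subset of `Fin n`. -/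
def phi (S : Finset (Fin n)) : LowerSet (Staircase n) :=
  ⟨{x | rwc x < gf S (dgc x)}, by
    intro a b hba ha
    simp only [Set.mem_setOf_eq] at ha ⊢
    rw [staircase_le_iff] at hba
    have hj : rwc b + dgc b ≤ rwc a + dgc a := by
      rw [rwc_add_dgc, rwc_add_dgc]; exact hba.2
    rcases le_or_gt (dgc b) (dgc a) with h | h
    · have := gf_anti S h
      omega
    · have h1 := gf_le_add S h.le
      omega⟩

lemma mem_phi {S : Finset (Fin n)} {x : Staircase n} : x ∈ phi S ↔ rwc x < gf S (dgc x) :=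
  Iff.rfl

lemma gf_le_gf_of_phi_le {S T : Finset (Fin n)} (h : phi S ≤ phi T) (m : ℕ) :
    gf S m ≤ gf T m := by
  by_contra hc
  push_neg at hc
  have h1 : 0 < gf S m := by omega
  have hmn : m < n := by
    by_contra hmn
    push_neg at hmn
    have : gf S m = 0 := by
      have := gf_le S m; omega
    omega
  have hb : gf T m + m < n := by
    have := gf_le S m; omega
  set x : Staircase n := cell (gf T m) (gf T m + m) (by omega) hb with hx
  have hxS : x ∈ phi S := by
    rw [mem_phi, hx]
    simp only [rwc_cell, dgc_cell]
    have : gf T m + m - gf T m = m := by omega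
    rw [this]
    exact hc
  have hxT : x ∈ phi T := h hxS
  rw [mem_phi, hx] at hxT
  simp only [rwc_cell, dgc_cell] at hxT
  have : gf T m + m - gf T m = m := by omega
  rw [this] at hxT
  omega

lemma phi_injective : Function.Injective (phi (n := n)) := by
  intro S T h
  have hg : ∀ m, gf S m = gf T m := fun m =>
    le_antisymm (gf_le_gf_of_phi_le h.le m) (gf_le_gf_of_phi_le h.ge m)
  ext k
  have h1 := gf_succ S k
  have h2 := gf_succ T k
  rw [hg (k : ℕ), hg ((k : ℕ) + 1)] at h1
  rw [h1] at h2
  split_ifs at h2 with hS hT hT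
  · exact iff_of_true hS hT
  · omega
  · omega
  · exact iff_of_false hS hT

/-- number of cells of the lower set `I` on diagonal `m` -/
noncomputable def hdg (I : LowerSet (Staircase n)) (m : ℕ) : ℕ :=
  ((univ : Finset (Staircase n)).filter (fun x => x ∈ I ∧ dgc x = m)).card

lemma hdg_le (I : LowerSet (Staircase n)) (m : ℕ) : hdg I m ≤ n - m := by
  unfold hdg
  rw [← Finset.card_range (n - m)]
  apply Finset.card_le_card_of_injOn rwc
  · intro y hy
    rw [Finset.mem_coe, Finset.mem_filter] at hy
    have h1 := rwc_add_dgc y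
    have h2 := clc_lt y
    rw [Finset.mem_coe, Finset.mem_range]
    omega
  · intro y hy z hz hyz
    rw [Finset.mem_coe, Finset.mem_filter] at hy hz
    refine cell_eq_iff hyz ?_
    rw [← rwc_add_dgc y, ← rwc_add_dgc z, hy.2.2, hz.2.2, hyz]

lemma mem_iff_rwc_lt_hdg {I : LowerSet (Staircase n)} {x : Staircase n} :
    x ∈ I ↔ rwc x < hdg I (dgc x) := by
  constructor
  · intro hx
    have hcard : (Finset.range (rwc x + 1)).card
        ≤ ((univ : Finset (Staircase n)).filter (fun y => y ∈ I ∧ dgc y = dgc x)).card := by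
      refine Finset.card_le_card_of_injOn
        (fun a => if ha : a ≤ rwc x then
            cell a (a + dgc x) (by omega)
            (by have h1 := rwc_add_dgc x; have h2 := clc_lt x; omega)
          else x) ?_ ?_
      · intro a ha
        rw [Finset.mem_coe, Finset.mem_range] at ha
        have ha' : a ≤ rwc x := by omega
        dsimp only
        rw [dif_pos ha']
        rw [Finset.mem_coe, Finset.mem_filter]
        refine ⟨Finset.mem_univ _, ?_, by simp⟩
        apply I.lower _ hx
        rw [staircase_le_iff]
        constructor
        · simpa using ha'
        · simp only [clc_cell]
          have h1 := rwc_add_dgc x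
          omega
      · intro a ha b hb hab
        rw [Finset.mem_coe, Finset.mem_range] at ha hb
        have ha' : a ≤ rwc x := by omega
        have hb' : b ≤ rwc x := by omega
        dsimp only at hab
        rw [dif_pos ha', dif_pos hb'] at hab
        have := congrArg rwc hab
        simpa using this
    rw [Finset.card_range] at hcard
    unfold hdg
    omega
  · intro hx
    by_contra hxI
    have hcard : hdg I (dgc x) ≤ (Finset.range (rwc x)).card := by
      unfold hdg
      apply Finset.card_le_card_of_injOn rwc
      · intro y hy
        rw [Finset.mem_coe, Finset.mem_filter] at hy
        rw [Finset.mem_coe, Finset.mem_range]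
        by_contra hc
        push_neg at hc
        apply hxI
        apply I.lower _ hy.2.1
        rw [staircase_le_iff]
        refine ⟨hc, ?_⟩
        rw [← rwc_add_dgc x, ← rwc_add_dgc y, hy.2.2]
        omega
      · intro y hy z hz hyz
        rw [Finset.mem_coe, Finset.mem_filter] at hy hz
        refine cell_eq_iff hyz ?_
        rw [← rwc_add_dgc y, ← rwc_add_dgc z, hy.2.2, hz.2.2, hyz]
    rw [Finset.card_range] at hcard
    omega

lemma hdg_mono (I : LowerSet (Staircase n)) (m : ℕ) : hdg I (m + 1) ≤ hdg I m := by
  by_cases h0 : hdg I (m + 1) = 0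
  · omega
  have hlt : hdg I (m + 1) - 1 < hdg I (m + 1) := by omega
  have hb := hdg_le I (m + 1)
  set c := hdg I (m + 1) - 1 with hc
  have hcell : (cell c (c + (m + 1)) (by omega) (by omega)) ∈ I := by
    rw [mem_iff_rwc_lt_hdg]
    simp only [rwc_cell, dgc_cell]
    have : c + (m + 1) - c = m + 1 := by omega
    rw [this]
    omega
  have hcell2 : (cell c (c + m) (by omega) (by omega)) ∈ I := by
    apply I.lower _ hcell
    rw [staircase_le_iff]
    simp only [rwc_cell, clc_cell]
    omega
  rw [mem_iff_rwc_lt_hdg] at hcell2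
  simp only [rwc_cell, dgc_cell] at hcell2
  have : c + m - c = m := by omega
  rw [this] at hcell2
  omega

lemma hdg_le_succ_add_one (I : LowerSet (Staircase n)) (m : ℕ) :
    hdg I m ≤ hdg I (m + 1) + 1 := by
  by_cases h0 : hdg I m ≤ 1
  · omega
  have hb := hdg_le I m
  set c := hdg I m - 1 with hc
  have hc1 : 1 ≤ c := by omega
  have hcell : (cell c (c + m) (by omega) (by omega)) ∈ I := by
    rw [mem_iff_rwc_lt_hdg]
    simp only [rwc_cell, dgc_cell]
    have : c + m - c = m := by omega
    rw [this]
    omega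
  have hcell2 : (cell (c - 1) (c - 1 + (m + 1)) (by omega) (by omega)) ∈ I := by
    apply I.lower _ hcell
    rw [staircase_le_iff]
    simp only [rwc_cell, clc_cell]
    omega
  rw [mem_iff_rwc_lt_hdg] at hcell2
  simp only [rwc_cell, dgc_cell] at hcell2
  have : c - 1 + (m + 1) - (c - 1) = m + 1 := by omega
  rw [this] at hcell2
  omega

/-- the subset of `Fin n` associated to a lower set -/
noncomputable def sof (I : LowerSet (Staircase n)) : Finset (Fin n) :=
  univ.filter (fun k : Fin n => hdg I ((k : ℕ) + 1) < hdg I (k : ℕ))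

lemma gf_sof_aux (I : LowerSet (Staircase n)) :
    ∀ d m, n ≤ m + d → gf (sof I) m = hdg I m := by
  intro d
  induction d with
  | zero =>
    intro m hm
    have hg : gf (sof I) m = 0 := by
      unfold gf
      rw [Finset.card_eq_zero, Finset.filter_eq_empty_iff]
      intro k _
      have := k.2
      omega
    have hh := hdg_le I m
    omega
  | succ d ih =>
    intro m hm
    by_cases hmn : n ≤ m + d
    · exact ih m hmn
    have hmlt : m < n := by omega
    have hk := gf_succ (sof I) ⟨m, hmlt⟩
    have hmem : (⟨m, hmlt⟩ : Fin n) ∈ sof I ↔ hdg I (m + 1) < hdg I m := by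
      unfold sof
      rw [Finset.mem_filter]
      simp
    have ihm1 : gf (sof I) (m + 1) = hdg I (m + 1) := ih (m + 1) (by omega)
    have h1 := hdg_mono I m
    have h2 := hdg_le_succ_add_one I m
    simp only [Fin.val_mk] at hk
    by_cases hcase : hdg I (m + 1) < hdg I m
    · rw [if_pos (hmem.2 hcase)] at hk
      omega
    · rw [if_neg (fun hmem' => hcase (hmem.1 hmem'))] at hk
      omega

lemma phi_sof (I : LowerSet (Staircase n)) : phi (sof I) = I := by
  apply LowerSet.ext
  ext x
  rw [SetLike.mem_coe, SetLike.mem_coe]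
  rw [mem_phi, gf_sof_aux I n (dgc x) (by omega), mem_iff_rwc_lt_hdg]

/-- The equivalence between subsets of `Fin n` and lower sets of the staircase. -/
noncomputable def lowerEquiv : Finset (Fin n) ≃ LowerSet (Staircase n) :=
  Equiv.ofBijective phi ⟨phi_injective, fun I => ⟨sof I, phi_sof I⟩⟩

lemma ncard_eq_filter_card {β : Type*} [Fintype β] (s : Set β) :
    s.ncard = ((univ : Finset β).filter (fun x => x ∈ s)).card := by
  rw [Set.ncard_eq_toFinset_card' s]
  congr 1
  ext x
  simp

lemma phi_symmdiff_card (S T : Finset (Fin n)) :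
    (((phi S : LowerSet (Staircase n)) : Set (Staircase n)) ∆ ((phi T : LowerSet (Staircase n)) : Set (Staircase n))).ncard
      = ∑ m ∈ Finset.range n, ((gf S m - gf T m) + (gf T m - gf S m)) := by
  rw [ncard_eq_filter_card]
  rw [Finset.card_eq_sum_card_fiberwise (f := dgc) (t := Finset.range n)
    (fun x _ => by
      rw [Finset.mem_coe, Finset.mem_range]
      have h1 := clc_lt x
      have h2 := rwc_add_dgc x
      omega)]
  apply Finset.sum_congr rfl
  intro m hm
  rw [Finset.filter_filter]
  have hIco : (gf S m - gf T m) + (gf T m - gf S m)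
      = (Finset.Ico (min (gf S m) (gf T m)) (max (gf S m) (gf T m))).card := by
    rw [Nat.card_Ico]
    omega
  rw [hIco]
  refine Finset.card_bij' (fun y _ => rwc y)
    (fun v hv => cell v (v + m)
      (by omega)
      (by
        have hv' := (Finset.mem_Ico.1 hv).2
        have := gf_le S m
        have := gf_le T m
        have hmn := Finset.mem_range.1 hm
        omega)) ?_ ?_ ?_ ?_
  · intro y hy
    rw [Finset.mem_filter] at hy
    obtain ⟨-, hy1, hy2⟩ := hy
    rw [Set.mem_symmDiff] at hy1
    rw [Finset.mem_Ico]
    rcases hy1 with ⟨h1, h2⟩ | ⟨h1, h2⟩ <;>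
      rw [SetLike.mem_coe, mem_phi, hy2] at h1 h2 <;> omega
  · intro v hv
    rw [Finset.mem_filter]
    have hv' := Finset.mem_Ico.1 hv
    have hvm : v + m - v = m := by omega
    refine ⟨Finset.mem_univ _, ?_, by simp only [dgc_cell]; omega⟩
    rw [Set.mem_symmDiff]
    rcases le_or_gt (gf S m) (gf T m) with hle | hlt
    · refine Or.inr ⟨?_, ?_⟩ <;> rw [SetLike.mem_coe, mem_phi] <;>
        simp only [rwc_cell, dgc_cell, hvm] <;> omega
    · refine Or.inl ⟨?_, ?_⟩ <;> rw [SetLike.mem_coe, mem_phi] <;>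
        simp only [rwc_cell, dgc_cell, hvm] <;> omega
  · intro y hy
    rw [Finset.mem_filter] at hy
    refine cell_eq_iff (by simp) ?_
    simp only [clc_cell]
    rw [← rwc_add_dgc y, hy.2.2]
  · intro v hv
    simp

noncomputable instance lowerSetFintype : Fintype (LowerSet (Staircase n)) :=
  have : Finite (LowerSet (Staircase n)) := Finite.of_equiv _ (lowerEquiv (n := n))
  Fintype.ofFinite _

lemma wiener_eq_triple_sum (n : ℕ) :
    wienerIndex (LowerSet (Staircase n))
      = ∑ S : Finset (Fin n), ∑ T : Finset (Fin n), ∑ m ∈ Finset.range n,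
          ((gf S m - gf T m) + (gf T m - gf S m)) := by
  rw [wienerIndex]
  simp only [finsum_eq_sum_of_fintype]
  rw [← Equiv.sum_comp (lowerEquiv (n := n))
    (fun I => ∑ q : LowerSet (Staircase n), (hasseGraph (LowerSet (Staircase n))).dist I q)]
  apply Finset.sum_congr rfl
  intro S _
  rw [← Equiv.sum_comp (lowerEquiv (n := n))
    (fun J => (hasseGraph (LowerSet (Staircase n))).dist (lowerEquiv S) J)]
  apply Finset.sum_congr rfl
  intro T _
  have : lowerEquiv S = phi S := rfl
  have hT : lowerEquiv T = phi T := rfl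
  rw [this, hT, hasse_dist_eq, phi_symmdiff_card]

end StaircaseSection

section CountSection
open Finset

/-- Splitting a sum over subsets of a disjoint union. -/
lemma sum_powerset_union {γ : Type*} [DecidableEq γ] (F : Finset γ → ℕ) :
    ∀ (v h : Finset γ), Disjoint h v →
      ∑ Sc ∈ (h ∪ v).powerset, F (Sc ∩ h) = 2 ^ v.card * ∑ A ∈ h.powerset, F A := by
  intro v
  induction v using Finset.induction_on with
  | empty =>
    intro h _
    rw [Finset.union_empty, Finset.card_empty, pow_zero, one_mul]
    apply Finset.sum_congr rfl
    intro Sc hSc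
    rw [Finset.inter_eq_left.2 (Finset.mem_powerset.1 hSc)]
  | @insert a v ha ih =>
    intro h hdisj
    rw [Finset.disjoint_insert_right] at hdisj
    obtain ⟨hah, hdisj⟩ := hdisj
    have hav : a ∉ h ∪ v := by
      rw [Finset.mem_union]
      tauto
    rw [Finset.union_insert, Finset.powerset_insert, Finset.sum_union, Finset.sum_image]
    · have h3 : ∑ x ∈ (h ∪ v).powerset, F (insert a x ∩ h)
          = ∑ x ∈ (h ∪ v).powerset, F (x ∩ h) :=
        Finset.sum_congr rfl (fun Sc _ => by rw [Finset.insert_inter_of_notMem hah])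
      rw [h3, ih h hdisj, Finset.card_insert_of_notMem ha]
      ring
    · intro x hx y hy hxy
      have hxa : a ∉ x := fun hc => hav (Finset.mem_powerset.1 hx hc)
      have hya : a ∉ y := fun hc => hav (Finset.mem_powerset.1 hy hc)
      ext z
      constructor <;> intro hz
      · have : z ∈ insert a y := by rw [← hxy]; exact Finset.mem_insert_of_mem hz
        rcases Finset.mem_insert.1 this with rfl | h
        · exact absurd hz hxa
        · exact h
      · have : z ∈ insert a x := by rw [hxy]; exact Finset.mem_insert_of_mem hz
        rcases Finset.mem_insert.1 this with rfl | h
        · exact absurd hz hya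
        · exact h
    · rw [Finset.disjoint_left]
      intro x hx hx2
      rw [Finset.mem_image] at hx2
      obtain ⟨y, hy, rfl⟩ := hx2
      exact hav (Finset.mem_powerset.1 hx (Finset.mem_insert_self a y))

/-- Grouping a sum over subsets by cardinality. -/
lemma sum_powerset_card {γ : Type*} [DecidableEq γ] (h : Finset γ) (f : ℕ → ℕ) :
    ∑ A ∈ h.powerset, f A.card = ∑ k ∈ Finset.range (h.card + 1), h.card.choose k * f k := by
  rw [Finset.sum_powerset_apply_card]
  simp only [smul_eq_mul]

end CountSection

section BinomSection
open Finset

/-- distance weight -/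
def wD (a b : ℕ) : ℕ := (a - b) + (b - a)

lemma sum_choose_telescope (t : ℕ) :
    2 * ∑ s ∈ Finset.range t, (2 * t).choose s * (t - s) = t * (2 * t).choose t := by
  have key : (2 * ∑ s ∈ Finset.range t, (2 * t).choose s * (t - s) : ℤ)
      = ((t * (2 * t).choose t : ℕ) : ℤ) := by
    rw [Nat.cast_sum, Finset.mul_sum]
    have hterm : ∀ s ∈ Finset.range t,
        (2 : ℤ) * ((2 * t).choose s * (t - s) : ℕ)
          = (((s + 1) * (2 * t).choose (s + 1) : ℕ) : ℤ) - ((s * (2 * t).choose s : ℕ) : ℤ) := by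
      intro s hs
      have hs' : s < t := Finset.mem_range.1 hs
      have hc := Nat.choose_succ_right_eq (2 * t) s
      have hcast : ((2 * t).choose (s + 1) : ℤ) * (s + 1)
          = ((2 * t).choose s : ℤ) * (2 * t - s) := by
        have h := hc
        zify [show s ≤ 2 * t by omega] at h
        linarith [h]
      push_cast [Nat.cast_sub hs'.le]
      linarith [hcast]
    rw [Finset.sum_congr rfl hterm, Finset.sum_range_sub (fun s => ((s * (2 * t).choose s : ℕ) : ℤ))]
    push_cast
    ring
  exact_mod_cast key

lemma sum_choose_wD (t : ℕ) :
    ∑ s ∈ Finset.range (2 * t + 1), (2 * t).choose s * wD s t = t * (2 * t).choose t := by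
  have hsplit : ∑ s ∈ Finset.range (2 * t + 1), (2 * t).choose s * wD s t
      = ∑ s ∈ Finset.range (2 * t + 1), (2 * t).choose s * (s - t)
        + ∑ s ∈ Finset.range (2 * t + 1), (2 * t).choose s * (t - s) := by
    rw [← Finset.sum_add_distrib]
    apply Finset.sum_congr rfl
    intro s _
    rw [wD, mul_add]
  have hreflect : ∑ s ∈ Finset.range (2 * t + 1), (2 * t).choose s * (s - t)
      = ∑ s ∈ Finset.range (2 * t + 1), (2 * t).choose s * (t - s) := by
    rw [← Finset.sum_range_reflect (fun s => (2 * t).choose s * (s - t)) (2 * t + 1)]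
    apply Finset.sum_congr rfl
    intro j hj
    have hj' : j ≤ 2 * t := by
      have := Finset.mem_range.1 hj
      omega
    have h1 : 2 * t + 1 - 1 - j = 2 * t - j := by omega
    rw [h1, Nat.choose_symm hj']
    congr 1
    omega
  have htrunc : ∑ s ∈ Finset.range (2 * t + 1), (2 * t).choose s * (t - s)
      = ∑ s ∈ Finset.range t, (2 * t).choose s * (t - s) := by
    symm
    apply Finset.sum_subset
    · intro s hs
      rw [Finset.mem_range] at hs ⊢
      omega
    · intro s _ hs
      rw [Finset.mem_range] at hs
      have : t - s = 0 := by omega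
      rw [this, mul_zero]
  rw [hsplit, hreflect, htrunc, ← two_mul, sum_choose_telescope]

lemma sum_sq_choose (t : ℕ) (f : ℕ → ℕ) :
    ∑ a ∈ Finset.range (t + 1), ∑ b ∈ Finset.range (t + 1), t.choose a * t.choose b * f (a + b)
      = ∑ s ∈ Finset.range (2 * t + 1), (2 * t).choose s * f s := by
  rw [← Finset.sum_product']
  rw [← Finset.sum_fiberwise_of_maps_to (g := fun p : ℕ × ℕ => p.1 + p.2)
    (t := Finset.range (2 * t + 1))
    (fun p hp => by
      rw [Finset.mem_product, Finset.mem_range, Finset.mem_range] at hp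
      rw [Finset.mem_range]
      omega)]
  apply Finset.sum_congr rfl
  intro s hs
  have hconst : ∀ p ∈ (Finset.range (t + 1) ×ˢ Finset.range (t + 1)).filter
      (fun p : ℕ × ℕ => p.1 + p.2 = s), t.choose p.1 * t.choose p.2 * f (p.1 + p.2)
        = t.choose p.1 * t.choose p.2 * f s := by
    intro p hp
    rw [(Finset.mem_filter.1 hp).2]
  rw [Finset.sum_congr rfl hconst, ← Finset.sum_mul]
  congr 1
  have hvd : (2 * t).choose s = ∑ ij ∈ Finset.HasAntidiagonal.antidiagonal s, t.choose ij.1 * t.choose ij.2 := by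
    rw [show 2 * t = t + t by ring, Nat.add_choose_eq]
  rw [hvd]
  apply Finset.sum_subset
  · intro p hp
    rw [Finset.mem_filter] at hp
    rw [Finset.HasAntidiagonal.mem_antidiagonal]
    exact hp.2
  · intro p hp hp2
    rw [Finset.HasAntidiagonal.mem_antidiagonal] at hp
    rw [Finset.mem_filter] at hp2
    push_neg at hp2
    by_cases h1 : p.1 ≤ t
    · by_cases h2 : p.2 ≤ t
      · exfalso
        apply absurd hp
        have := hp2 (Finset.mem_product.2 ⟨Finset.mem_range.2 (by omega), Finset.mem_range.2 (by omega)⟩)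
        exact this
      · rw [Nat.choose_eq_zero_of_lt (by omega : t < p.2), mul_zero]
    · rw [Nat.choose_eq_zero_of_lt (by omega : t < p.1), zero_mul]

lemma reflect_big (t : ℕ) :
    ∑ a ∈ Finset.range (t + 1), ∑ b ∈ Finset.range (t + 1), t.choose a * t.choose b * wD a b
      = t * (2 * t).choose t := by
  have hstep : ∀ a ∈ Finset.range (t + 1),
      ∑ b ∈ Finset.range (t + 1), t.choose a * t.choose b * wD a b
        = ∑ b ∈ Finset.range (t + 1), t.choose a * t.choose b * wD (a + b) t := by
    intro a ha
    rw [← Finset.sum_range_reflect (fun b => t.choose a * t.choose b * wD a b) (t + 1)]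
    apply Finset.sum_congr rfl
    intro j hj
    have hj' : j ≤ t := by
      have := Finset.mem_range.1 hj
      omega
    have h1 : t + 1 - 1 - j = t - j := by omega
    rw [h1, Nat.choose_symm hj']
    congr 1
    rw [wD, wD]
    omega
  rw [Finset.sum_congr rfl hstep, sum_sq_choose t (fun s => wD s t), sum_choose_wD]

end BinomSection

section FinalSection
open Finset

lemma card_H (n m : ℕ) :
    ((univ : Finset (Fin n)).filter (fun k : Fin n => m ≤ (k : ℕ))).card = n - m := by
  rw [← Nat.card_Ico m n]
  refine Finset.card_bij' (fun (x : Fin n) _ => (x : ℕ))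
    (fun (v : ℕ) hv => (⟨v, (Finset.mem_Ico.1 hv).2⟩ : Fin n)) ?_ ?_ ?_ ?_
  · intro a ha
    exact Finset.mem_Ico.2 ⟨(Finset.mem_filter.1 ha).2, a.2⟩
  · intro v hv
    exact Finset.mem_filter.2 ⟨Finset.mem_univ _, (Finset.mem_Ico.1 hv).1⟩
  · intro a _
    exact Fin.ext rfl
  · intro v _
    rfl

lemma gf_eq_inter_card {n : ℕ} (S : Finset (Fin n)) (m : ℕ) :
    gf S m = (S ∩ (univ : Finset (Fin n)).filter (fun k : Fin n => m ≤ (k : ℕ))).card := by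
  unfold gf
  congr 1
  ext k
  simp [Finset.mem_filter, Finset.mem_inter]

lemma pair_sum {n : ℕ} (m : ℕ) (hm : m < n) :
    ∑ S : Finset (Fin n), ∑ T : Finset (Fin n), wD (gf S m) (gf T m)
      = 4 ^ m * ((n - m) * (2 * (n - m)).choose (n - m)) := by
  set H := (univ : Finset (Fin n)).filter (fun k : Fin n => m ≤ (k : ℕ)) with hHdef
  have hHcard : H.card = n - m := card_H n m
  have hvH : H ∪ ((univ : Finset (Fin n)) \ H) = univ :=
    Finset.union_sdiff_of_subset (Finset.subset_univ H)
  have hdisj : Disjoint H ((univ : Finset (Fin n)) \ H) := Finset.disjoint_sdiff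
  have hvcard : ((univ : Finset (Fin n)) \ H).card = m := by
    rw [Finset.card_sdiff_of_subset (Finset.subset_univ H), hHcard, Finset.card_univ, Fintype.card_fin]
    omega
  have hgf : ∀ S : Finset (Fin n), gf S m = (S ∩ H).card := fun S => gf_eq_inter_card S m
  have huniv : (univ : Finset (Finset (Fin n))) = (H ∪ ((univ : Finset (Fin n)) \ H)).powerset := by
    rw [hvH, Finset.powerset_univ]
  have h4 : (4 : ℕ) ^ m = 2 ^ m * 2 ^ m := by
    rw [← mul_pow]
    norm_num
  calc ∑ S : Finset (Fin n), ∑ T : Finset (Fin n), wD (gf S m) (gf T m)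
      = ∑ S ∈ (H ∪ ((univ : Finset (Fin n)) \ H)).powerset,
          ∑ T ∈ (H ∪ ((univ : Finset (Fin n)) \ H)).powerset,
            wD ((S ∩ H).card) ((T ∩ H).card) :=
        Finset.sum_congr huniv (fun S _ => Finset.sum_congr huniv
          (fun T _ => by rw [hgf S, hgf T]))
    _ = 2 ^ m * ∑ A ∈ H.powerset,
          ∑ T ∈ (H ∪ ((univ : Finset (Fin n)) \ H)).powerset, wD A.card ((T ∩ H).card) := by
        rw [sum_powerset_union
          (fun A => ∑ T ∈ (H ∪ ((univ : Finset (Fin n)) \ H)).powerset, wD A.card ((T ∩ H).card))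
          ((univ : Finset (Fin n)) \ H) H hdisj, hvcard]
    _ = 2 ^ m * ∑ A ∈ H.powerset, (2 ^ m * ∑ B ∈ H.powerset, wD A.card B.card) := by
        congr 1
        apply Finset.sum_congr rfl
        intro A _
        rw [sum_powerset_union (fun B => wD A.card B.card)
          ((univ : Finset (Fin n)) \ H) H hdisj, hvcard]
    _ = 4 ^ m * ∑ A ∈ H.powerset, ∑ B ∈ H.powerset, wD A.card B.card := by
        rw [← Finset.mul_sum, h4, mul_assoc]
    _ = 4 ^ m * ((n - m) * (2 * (n - m)).choose (n - m)) := by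
        congr 1
        rw [sum_powerset_card H (fun a => ∑ B ∈ H.powerset, wD a B.card)]
        have hinner : ∀ k ∈ Finset.range (H.card + 1),
            H.card.choose k * ∑ B ∈ H.powerset, wD k B.card
              = ∑ b ∈ Finset.range (H.card + 1), H.card.choose k * H.card.choose b * wD k b := by
          intro k _
          rw [sum_powerset_card H (fun b => wD k b), Finset.mul_sum]
          apply Finset.sum_congr rfl
          intro b _
          ring
        rw [Finset.sum_congr rfl hinner, hHcard, reflect_big]

lemma Ysum (n : ℕ) :
    3 * ∑ m ∈ Finset.range n, 4 ^ m * ((n - m) * (2 * (n - m)).choose (n - m))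
      = n * (2 * n + 1) * Nat.centralBinom n := by
  induction n with
  | zero => simp
  | succ n ih =>
    have hstep : ∑ m ∈ Finset.range (n + 1),
          4 ^ m * ((n + 1 - m) * (2 * (n + 1 - m)).choose (n + 1 - m))
        = 4 * ∑ m ∈ Finset.range n, 4 ^ m * ((n - m) * (2 * (n - m)).choose (n - m))
          + (n + 1) * (2 * (n + 1)).choose (n + 1) := by
      rw [Finset.sum_range_succ']
      congr 1
      · rw [Finset.mul_sum]
        apply Finset.sum_congr rfl
        intro i hi
        have h1 : n + 1 - (i + 1) = n - i := by omega
        rw [h1]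
        ring
      · simp
    rw [hstep]
    have hcb := Nat.succ_mul_centralBinom_succ n
    have hc1 : (2 * (n + 1)).choose (n + 1) = Nat.centralBinom (n + 1) :=
      (Nat.centralBinom_eq_two_mul_choose (n + 1)).symm
    rw [hc1]
    zify at ih hcb ⊢
    linear_combination 4 * ih - 2 * (n : ℤ) * hcb

lemma wiener_nat (n : ℕ) :
    3 * wienerIndex (LowerSet (Staircase n)) = n * (2 * n + 1) * Nat.centralBinom n := by
  rw [wiener_eq_triple_sum]
  have hswap : (∑ S : Finset (Fin n), ∑ T : Finset (Fin n), ∑ m ∈ Finset.range n,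
        ((gf S m - gf T m) + (gf T m - gf S m)))
      = ∑ m ∈ Finset.range n, ∑ S : Finset (Fin n), ∑ T : Finset (Fin n),
          wD (gf S m) (gf T m) := by
    have h1 : ∀ S : Finset (Fin n), (∑ T : Finset (Fin n), ∑ m ∈ Finset.range n,
        ((gf S m - gf T m) + (gf T m - gf S m)))
        = ∑ m ∈ Finset.range n, ∑ T : Finset (Fin n), wD (gf S m) (gf T m) := by
      intro S
      exact Finset.sum_comm
    rw [Finset.sum_congr rfl (fun S _ => h1 S), Finset.sum_comm]
  rw [hswap]
  have hval : ∀ m ∈ Finset.range n, (∑ S : Finset (Fin n), ∑ T : Finset (Fin n),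
      wD (gf S m) (gf T m)) = 4 ^ m * ((n - m) * (2 * (n - m)).choose (n - m)) := by
    intro m hm
    exact pair_sum m (Finset.mem_range.1 hm)
  rw [Finset.sum_congr rfl hval, Ysum]

end FinalSection
open Finset Filter Asymptotics Real
open scoped Nat

noncomputable section

lemma two_mul_tendsto : Tendsto (fun n : ℕ => 2 * n) atTop atTop :=
  tendsto_atTop_atTop.2 fun b => ⟨b, fun a ha => le_trans ha (by omega)⟩

/-- Stirling ratio -/
noncomputable def stirR (n : ℕ) : ℝ := (n ! : ℝ) / (Real.sqrt (2 * n * π) * (n / Real.exp 1) ^ n)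

lemma stirR_tendsto : Tendsto stirR atTop (nhds 1) := by
  have hz : ∀ᶠ n : ℕ in atTop, Real.sqrt (2 * n * π) * ((n : ℝ) / Real.exp 1) ^ n ≠ 0 := by
    filter_upwards [eventually_ge_atTop 1] with n hn
    have hn0 : (0:ℝ) < n := by exact_mod_cast hn
    have he : (0:ℝ) < Real.exp 1 := Real.exp_pos 1
    have : (0:ℝ) < Real.sqrt (2 * n * π) := Real.sqrt_pos.2 (by positivity)
    positivity
  exact (isEquivalent_iff_tendsto_one hz).1 Stirling.factorial_isEquivalent_stirling

lemma cb_div_tendsto_one :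
    Tendsto (fun n : ℕ => (Nat.centralBinom n : ℝ) / (4 ^ n / Real.sqrt (π * n))) atTop (nhds 1) := by
  have h2 : Tendsto (fun n : ℕ => stirR (2 * n)) atTop (nhds 1) :=
    stirR_tendsto.comp two_mul_tendsto
  have hq : Tendsto (fun n : ℕ => stirR (2 * n) / (stirR n * stirR n)) atTop (nhds 1) := by
    have := h2.div (stirR_tendsto.mul stirR_tendsto) (by norm_num)
    have e : (1:ℝ) / (1 * 1) = 1 := by norm_num
    rw [e] at this
    exact this
  refine hq.congr' ?_
  filter_upwards [eventually_ge_atTop 1] with n hn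
  have hn0 : (0:ℝ) < n := by exact_mod_cast hn
  have he : (0:ℝ) < Real.exp 1 := Real.exp_pos 1
  have hfpos : (0:ℝ) < (n ! : ℝ) := by exact_mod_cast n.factorial_pos
  have hf2pos : (0:ℝ) < ((2 * n)! : ℝ) := by exact_mod_cast (2*n).factorial_pos
  have hvpos : (0:ℝ) < Real.sqrt (2 * n * π) * ((n : ℝ) / Real.exp 1) ^ n := by
    have : (0:ℝ) < Real.sqrt (2 * n * π) := Real.sqrt_pos.2 (by positivity)
    positivity
  have hspi : (0:ℝ) < Real.sqrt (π * n) := Real.sqrt_pos.2 (by positivity)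
  -- key exact identities
  have hcb : (Nat.centralBinom n : ℝ) * ((n ! : ℝ) * (n ! : ℝ)) = ((2 * n)! : ℝ) := by
    have h := Nat.choose_mul_factorial_mul_factorial (show n ≤ 2 * n by omega)
    have h2n : 2 * n - n = n := by omega
    rw [h2n] at h
    exact_mod_cast congrArg (Nat.cast (R := ℝ)) (by rw [← h, Nat.centralBinom]; ring)
  have hv2 : Real.sqrt (2 * ((2*n : ℕ):ℝ) * π) * (((2*n : ℕ):ℝ) / Real.exp 1) ^ (2*n)
      = 2 * Real.sqrt (π * n) * (4 ^ n * (((n:ℝ) / Real.exp 1) ^ n) ^ 2) := by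
    have h2n : ((2 * n : ℕ) : ℝ) = 2 * n := by push_cast; ring
    have hs1 : Real.sqrt (2 * ((2 * n : ℕ):ℝ) * π) = 2 * Real.sqrt (π * n) := by
      rw [h2n, show (2:ℝ) * (2 * n) * π = 2 ^ 2 * (π * n) by ring,
        Real.sqrt_mul (by positivity), Real.sqrt_sq (by norm_num)]
    have hpow : (((2 * n : ℕ) : ℝ) / Real.exp 1) ^ (2 * n)
        = 4 ^ n * (((n:ℝ) / Real.exp 1) ^ n) ^ 2 := by
      rw [h2n, show (2 * (n:ℝ)) / Real.exp 1 = 2 * ((n:ℝ) / Real.exp 1) by ring, mul_pow,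
        show (4:ℝ) = 2^2 from by norm_num, ← pow_mul]
      ring
    rw [hs1, hpow]
  have hsq : Real.sqrt (π * n) * Real.sqrt (π * n) = π * n := Real.mul_self_sqrt (by positivity)
  -- now compute
  show stirR (2 * n) / (stirR n * stirR n) = (Nat.centralBinom n : ℝ) / (4 ^ n / Real.sqrt (π * n))
  rw [stirR, stirR, hv2]
  have hs2 : (0:ℝ) < Real.sqrt (2 * (n:ℝ) * π) := Real.sqrt_pos.2 (by positivity)
  have hs2sq : Real.sqrt (2 * (n:ℝ) * π) * Real.sqrt (2 * (n:ℝ) * π) = 2 * n * π :=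
    Real.mul_self_sqrt (by positivity)
  have hxne : ((n:ℝ)/Real.exp 1)^n ≠ 0 := pow_ne_zero _ (by positivity)
  have h4 : (0:ℝ) < 4 ^ n := by positivity
  set x := ((n:ℝ)/Real.exp 1)^n with hxdef
  set a := Real.sqrt (π * (n:ℝ)) with hadef
  set b := Real.sqrt (2 * (n:ℝ) * π) with hbdef
  set p : ℝ := 4 ^ n with hpdef
  set C := (Nat.centralBinom n : ℝ) with hCdef
  set F := ((n)! : ℝ) with hFdef
  set G := (((2*n))! : ℝ) with hGdef
  have hane : a ≠ 0 := ne_of_gt hspi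
  have hbne : b ≠ 0 := ne_of_gt hs2
  have hpne : p ≠ 0 := ne_of_gt h4
  have hFne : F ≠ 0 := ne_of_gt hfpos
  field_simp
  linear_combination (-(b*b)) * hcb + (C*F*F) * hs2sq - (2*C*F*F) * hsq

end

lemma wiener_value (n : ℕ) :
    (wienerIndex (LowerSet (Staircase n)) : ℝ)
      = n * (2 * n + 1) * (Nat.centralBinom n : ℝ) / 3 := by
  have h := wiener_nat n
  have h' : ((3 * wienerIndex (LowerSet (Staircase n)) : ℕ) : ℝ)
      = ((n * (2 * n + 1) * Nat.centralBinom n : ℕ) : ℝ) := by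
    exact_mod_cast congrArg (Nat.cast (R := ℝ)) h
  push_cast at h'
  linarith
open Filter in
/-- Asymptotics of the Wiener index of the lattice of lower sets of the
shifted staircase. -/
theorem wiener_staircase_asymptotic :
    Tendsto
      (fun n : ℕ =>
        (wienerIndex (LowerSet (Staircase n)) : ℝ) /
          ((4 : ℝ) ^ n * (n : ℝ) ^ ((3 : ℝ) / 2)))
      atTop (nhds (2 / (3 * Real.sqrt Real.pi))) := by

  have key : Tendsto (fun n : ℕ =>
      ((Nat.centralBinom n : ℝ) / (4 ^ n / Real.sqrt (π * n))) * ((2 + 1/(n:ℝ)) / (3 * Real.sqrt π)))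
      atTop (nhds (2 / (3 * Real.sqrt π))) := by
    have h2 : Tendsto (fun n : ℕ => ((2 : ℝ) + 1/(n:ℝ)) / (3 * Real.sqrt π)) atTop
        (nhds ((2 + 0) / (3 * Real.sqrt π))) :=
      (Tendsto.const_add 2 tendsto_one_div_atTop_nhds_zero_nat).div_const _
    have := cb_div_tendsto_one.mul h2
    simpa using this
  refine key.congr' ?_
  filter_upwards [eventually_ge_atTop 1] with n hn
  have hn0 : (0:ℝ) < n := by exact_mod_cast hn
  have hsπ : (0:ℝ) < Real.sqrt π := Real.sqrt_pos.2 Real.pi_pos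
  have hsn : (0:ℝ) < Real.sqrt n := Real.sqrt_pos.2 hn0
  have hsπn : Real.sqrt (π * n) = Real.sqrt π * Real.sqrt n := Real.sqrt_mul Real.pi_pos.le _
  have hrpow : (n:ℝ) ^ ((3:ℝ)/2) = n * Real.sqrt n := by
    rw [show (3:ℝ)/2 = 1 + 1/2 by norm_num, Real.rpow_add hn0, Real.rpow_one,
      ← Real.sqrt_eq_rpow]
  have hss : Real.sqrt (n:ℝ) * Real.sqrt (n:ℝ) = n := Real.mul_self_sqrt hn0.le
  have h4 : (0:ℝ) < 4 ^ n := by positivity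
  rw [wiener_value n, hrpow, hsπn]
  field_simp
  linear_combination (Nat.centralBinom n : ℝ) * hss
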